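/- arXiv:2010.05284 — 3 statements merged into one kernel-verified Lean document; each statement's English description precedes it below -/
import Mathlib

section
/- In a frame L, for any family (p_i) of prime elements, the set of all meets of subfamilies, 𝔐({p_i}) = {⋀ M : M ⊆ {p_i}}, is a sublocale of L. -/
def IsSublocale {L : Type*} [Order.Frame L] (S : Set L) : Prop :=
  (∀ T ⊆ S, sInf T ∈ S) ∧ ∀ x : L, ∀ s ∈ S, x ⇨ s ∈ S

theorem stmt_10 (L : Type*) [Order.Frame L] {ι : Type*} (p : ι → L)
    (hp : ∀ i, p i ≠ ⊤ ∧ ∀ x y : L, x ⊓ y ≤ p i → x ≤ p i ∨ y ≤ p i) :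
    IsSublocale {a : L | ∃ M ⊆ Set.range p, a = sInf M} := by
  constructor
  · intro T hT
    refine ⟨{a ∈ Set.range p | sInf T ≤ a}, fun a ha => ha.1, le_antisymm ?_ ?_⟩
    · exact le_sInf fun a ha => ha.2
    · refine le_sInf fun t ht => ?_
      obtain ⟨M, hM, rfl⟩ := hT ht
      exact le_sInf fun m hm => sInf_le ⟨hM hm, (sInf_le ht).trans (sInf_le hm)⟩
  · rintro x s ⟨M, hM, rfl⟩
    refine ⟨{m ∈ M | x ⇨ m = m}, fun m hm => hM hm.1, le_antisymm ?_ ?_⟩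
    · refine le_sInf fun m hm => ?_
      calc x ⇨ sInf M ≤ x ⇨ m := himp_le_himp_left (sInf_le hm.1)
        _ = m := hm.2
    · rw [le_himp_iff]
      refine le_sInf fun m hm => ?_
      obtain ⟨i, rfl⟩ := hM hm
      rcases (hp i).2 x (x ⇨ p i) (by rw [inf_himp]; exact inf_le_right) with h | h
      · exact inf_le_right.trans h
      · exact inf_le_left.trans (sInf_le ⟨hm, le_antisymm h le_himp⟩)
end

section
/- Let L be a frame and a ∈ L an element equal to the meet of the primes above it. Then for every x ∈ L, x → a = ⋀{q prime : a ≤ q and x ≰ q}. -/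
def PrimeElt {L : Type*} [Order.Frame L] (p : L) : Prop :=
  p ≠ ⊤ ∧ ∀ x y : L, x ⊓ y ≤ p → x ≤ p ∨ y ≤ p

theorem stmt_17 (L : Type*) [Order.Frame L] (a : L)
    (ha : a = sInf {q : L | PrimeElt q ∧ a ≤ q}) (x : L) :
    x ⇨ a = sInf {q : L | PrimeElt q ∧ a ≤ q ∧ ¬ x ≤ q} := by
  apply le_antisymm
  · apply le_sInf
    rintro q ⟨hq, haq, hxq⟩
    rcases hq.2 x (x ⇨ a) (le_trans (by simp) haq) with h | h
    · exact absurd h hxq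
    · exact h
  · rw [le_himp_iff]; conv_rhs => rw [ha]
    apply le_sInf
    rintro q ⟨hq, haq⟩
    by_cases hxq : x ≤ q
    · exact le_trans inf_le_right hxq
    · exact le_trans inf_le_left (sInf_le ⟨hq, haq, hxq⟩)
end

section
/- Let L be a frame and a ∈ L the meet of the primes above it. A prime p with a ≤ p satisfies (p → a) → a = p if and only if p → a ≰ p. -/
theorem stmt_18 (L : Type*) [Order.Frame L] (a : L)
    (ha : a = sInf {q : L | PrimeElt q ∧ a ≤ q}) (p : L)
    (hp : PrimeElt p) (hap : a ≤ p) :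
    (p ⇨ a) ⇨ a = p ↔ ¬ (p ⇨ a) ≤ p := by
  constructor
  · intro h hle
    have h1 : p ⇨ a ≤ a := by
      calc p ⇨ a = (p ⇨ a) ⊓ p := (inf_eq_left.mpr hle).symm
        _ ≤ a := himp_inf_le
    have h2 : (p ⇨ a) ⇨ a = ⊤ := himp_eq_top_iff.mpr h1
    exact hp.1 (h ▸ h2 ▸ rfl)
  · intro h
    apply le_antisymm
    · have key : ((p ⇨ a) ⇨ a) ⊓ (p ⇨ a) ≤ p := le_trans himp_inf_le hap
      rcases hp.2 _ _ key with h1 | h1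
      · exact h1
      · exact absurd h1 h
    · exact le_himp_iff.mpr (by rw [inf_comm]; exact himp_inf_le)
end
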